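/- Let Ω ⊂ ℝⁿ be a bounded convex open set (n ≥ 2) and G : [0,∞) → ℝ a strictly positive locally integrable function. Suppose f ∈ L¹(Ω) (extended by 0 outside Ω) satisfies ∫_{Ω ∩ Σ} f dH^{n−1} = G(min_{j=1,2} dist(Σ, Π_j)) for every hyperplane Σ with H^{n−1}(Ω ∩ Σ) > 0, where Π₁, Π₂ are the two supporting hyperplanes of Ω parallel to Σ. Then Ω is an open ball. -/

import Mathlib

open MeasureTheory Set intervalIntegral
open scoped MeasureTheory RealInnerProductSpace ENNReal NNReal


instance haarH (m : ℕ) : (μH[(m:ℕ)] : Measure (EuclideanSpace ℝ (Fin m))).IsAddHaarMeasure := by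
  have h := @isAddHaarMeasure_hausdorffMeasure (EuclideanSpace ℝ (Fin m)) _ _ _ _ _
  simpa [finrank_euclideanSpace_fin] using h

noncomputable def kappa (m : ℕ) : ℝ≥0 :=
  (μH[(m:ℕ)] : Measure (EuclideanSpace ℝ (Fin m))).addHaarScalarFactor volume

lemma hausdorff_eq (m : ℕ) :
    (μH[(m:ℕ)] : Measure (EuclideanSpace ℝ (Fin m))) = kappa m • volume :=
  Measure.isAddLeftInvariant_eq_smul _ _

lemma kappa_pos (m : ℕ) : 0 < kappa m :=
  Measure.addHaarScalarFactor_pos_of_isAddHaarMeasure _ _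

section dir
variable {m : ℕ}

local notation "E" => EuclideanSpace ℝ (Fin (m+1))
local notation "F2" => EuclideanSpace ℝ (Fin m)

lemma exists_basis (ξ : E) (hξ : ‖ξ‖ = 1) :
    ∃ b : OrthonormalBasis (Fin (m+1)) ℝ E, b 0 = ξ := by
  have horth : Orthonormal ℝ (({0} : Set (Fin (m+1))).restrict (fun _ : Fin (m+1) => ξ)) := by
    constructor
    · intro i; exact hξ
    · intro i j hij
      exact absurd (Subtype.ext (by rw [Set.eq_of_mem_singleton i.2, Set.eq_of_mem_singleton j.2] : (i:Fin (m+1)) = j)) hij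
  obtain ⟨b, hb⟩ := Orthonormal.exists_orthonormalBasis_extension_of_card_eq (by simp) horth
  exact ⟨b, hb 0 rfl⟩

-- coordinates map
noncomputable def Phi (b : OrthonormalBasis (Fin (m+1)) ℝ E) (p : ℝ × (Fin m → ℝ)) : E :=
  b.repr.symm ((MeasurableEquiv.toLp 2 (Fin (m+1) → ℝ)).symm.symm
    ((MeasurableEquiv.piFinSuccAbove (fun _ : Fin (m+1) => ℝ) 0).symm p))

lemma Phi_mp (b : OrthonormalBasis (Fin (m+1)) ℝ E) :
    MeasurePreserving (Phi b) volume volume := by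
  have h1 := (MeasureTheory.volume_preserving_piFinSuccAbove (fun _ : Fin (m+1) => ℝ) 0).symm
  have h2 := (EuclideanSpace.volume_preserving_symm_measurableEquiv_toLp (Fin (m+1))).symm
  have h3 := (b.repr.symm : EuclideanSpace ℝ (Fin (m+1)) ≃ₗᵢ[ℝ] E).measurePreserving
  exact h3.comp (h2.comp h1)

lemma Phi_coords (b : OrthonormalBasis (Fin (m+1)) ℝ E) (p : ℝ × (Fin m → ℝ)) :
    b.repr (Phi b p) = (MeasurableEquiv.toLp 2 (Fin (m+1) → ℝ)).symm.symm (Fin.cons p.1 p.2) := by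
  simp [Phi, MeasurableEquiv.piFinSuccAbove, Fin.insertNthEquiv, Fin.insertNth_zero']

lemma Phi_inner (b : OrthonormalBasis (Fin (m+1)) ℝ E) (p : ℝ × (Fin m → ℝ)) :
    ⟪Phi b p, b 0⟫ = p.1 := by
  have h := b.repr.inner_map_map (Phi b p) (b 0)
  rw [← h, Phi_coords, b.repr_self]
  simp [EuclideanSpace.inner_single_right, MeasurableEquiv.toLp_apply]

lemma Phi_surj (b : OrthonormalBasis (Fin (m+1)) ℝ E) (x : E) : ∃ p, Phi b p = x := by
  refine ⟨(MeasurableEquiv.piFinSuccAbove (fun _ : Fin (m+1) => ℝ) 0)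
    ((MeasurableEquiv.toLp 2 (Fin (m+1) → ℝ)).symm (b.repr x)), ?_⟩
  simp [Phi, Fin.consEquiv, Fin.cons_self_tail]

end dir

section dir2
variable {m : ℕ}
local notation "E" => EuclideanSpace ℝ (Fin (m+1))
local notation "F2" => EuclideanSpace ℝ (Fin m)

noncomputable def psi (b : OrthonormalBasis (Fin (m+1)) ℝ E) (t : ℝ) (z : F2) : E :=
  Phi b (t, (WithLp.equiv 2 (Fin m → ℝ)) z)

lemma psi_isometry (b : OrthonormalBasis (Fin (m+1)) ℝ E) (t : ℝ) :
    Isometry (psi b t) := by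
  intro z z'
  have h1 : ∀ z : F2, psi b t z
      = b.repr.symm ((MeasurableEquiv.toLp 2 (Fin (m+1) → ℝ)).symm.symm
          (Fin.cons t ((WithLp.equiv 2 (Fin m → ℝ)) z))) := by
    intro z
    have := Phi_coords b (t, (WithLp.equiv 2 (Fin m → ℝ)) z)
    apply b.repr.injective
    simpa [psi] using this
  rw [edist_dist, edist_dist, h1, h1, b.repr.symm.dist_map]
  congr 1
  rw [EuclideanSpace.dist_eq, EuclideanSpace.dist_eq]
  congr 1
  rw [Fin.sum_univ_succ]
  simp [MeasurableEquiv.toLp_apply]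

lemma psi_inner (b : OrthonormalBasis (Fin (m+1)) ℝ E) (t : ℝ) (z : F2) :
    ⟪psi b t z, b 0⟫ = t := Phi_inner b _

lemma range_psi (b : OrthonormalBasis (Fin (m+1)) ℝ E) (t : ℝ) :
    Set.range (psi b t) = {x : E | ⟪x, b 0⟫ = t} := by
  ext x
  constructor
  · rintro ⟨z, rfl⟩; exact psi_inner b t z
  · intro hx
    obtain ⟨p, rfl⟩ := Phi_surj b x
    have : p.1 = t := by rw [← Phi_inner b p]; exact hx
    exact ⟨(WithLp.equiv 2 (Fin m → ℝ)).symm p.2, by simp [psi, ← this]⟩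

end dir2

section dir3
variable {m : ℕ}
local notation "E" => EuclideanSpace ℝ (Fin (m+1))
local notation "F2" => EuclideanSpace ℝ (Fin m)

lemma slice_restrict (b : OrthonormalBasis (Fin (m+1)) ℝ E) (t : ℝ) :
    (μH[(m:ℕ)] : Measure E).restrict {x : E | ⟪x, b 0⟫ = t}
      = Measure.map (psi b t) (μH[(m:ℕ)] : Measure F2) := by
  have hmeasH : MeasurableSet {x : E | ⟪x, b 0⟫ = t} :=
    (isClosed_eq ((continuous_id.inner continuous_const)) continuous_const).measurableSet
  refine Measure.ext fun A hA => ?_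
  rw [Measure.map_apply ((psi_isometry b t).continuous.measurable) hA,
    Measure.restrict_apply hA]
  have h1 : A ∩ {x : E | ⟪x, b 0⟫ = t} = psi b t '' (psi b t ⁻¹' A) := by
    rw [Set.image_preimage_eq_inter_range, range_psi]
  rw [h1, (psi_isometry b t).hausdorffMeasure_image (Or.inl (by positivity))]

lemma slice_integral (b : OrthonormalBasis (Fin (m+1)) ℝ E) (t : ℝ)
    (Ω : Set E) (hΩ : MeasurableSet Ω) (g : E → ℝ) (hgsupp : ∀ x, x ∉ Ω → g x = 0) :
    ∫ x in Ω ∩ {x : E | ⟪x, b 0⟫ = t}, g x ∂(μH[(m:ℕ)] : Measure E)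
      = (kappa m).toReal * ∫ y : Fin m → ℝ, g (Phi b (t, y)) := by
  have hmeasH : MeasurableSet {x : E | ⟪x, b 0⟫ = t} :=
    (isClosed_eq ((continuous_id.inner continuous_const)) continuous_const).measurableSet
  have hmeasS : MeasurableSet (Ω ∩ {x : E | ⟪x, b 0⟫ = t}) := hΩ.inter hmeasH
  have hemb : MeasurableEmbedding (psi b t) :=
    ((psi_isometry b t).isClosedEmbedding).measurableEmbedding
  have step1 : ∫ x in Ω ∩ {x : E | ⟪x, b 0⟫ = t}, g x ∂(μH[(m:ℕ)] : Measure E)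
      = ∫ x in Ω ∩ {x : E | ⟪x, b 0⟫ = t}, g x
          ∂((μH[(m:ℕ)] : Measure E).restrict {x : E | ⟪x, b 0⟫ = t}) := by
    rw [Measure.restrict_restrict hmeasS, Set.inter_assoc, Set.inter_self]
  rw [step1, slice_restrict, MeasurableEmbedding.setIntegral_map hemb]
  have hpre : psi b t ⁻¹' (Ω ∩ {x : E | ⟪x, b 0⟫ = t}) = psi b t ⁻¹' Ω := by
    rw [Set.preimage_inter,
      show psi b t ⁻¹' {x : E | ⟪x, b 0⟫ = t} = Set.univ from
        Set.eq_univ_of_forall fun z => psi_inner b t z, Set.inter_univ]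
  rw [hpre, hausdorff_eq,
    show (kappa m • (volume : Measure F2)) = ((kappa m : ℝ≥0∞) • (volume : Measure F2)) from rfl,
    Measure.restrict_smul, MeasureTheory.integral_smul_measure]
  have hz : ∀ z : F2, z ∉ psi b t ⁻¹' Ω → g (psi b t z) = 0 := fun z hzn => hgsupp _ hzn
  rw [setIntegral_eq_integral_of_forall_compl_eq_zero hz]
  have hmp := ((EuclideanSpace.volume_preserving_symm_measurableEquiv_toLp (Fin m)).symm :
    MeasurePreserving _ volume volume)
  have := hmp.integral_comp' (fun z : F2 => g (psi b t z))
  rw [← this]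
  have heq : ∀ y : Fin m → ℝ,
      g (psi b t ((MeasurableEquiv.toLp 2 (Fin m → ℝ)).symm.symm y)) = g (Phi b (t, y)) := by
    intro y; rfl
  simp only [heq, ENNReal.smul_def, smul_eq_mul, ENNReal.toReal_mul]
  norm_num

lemma fubini_dir (b : OrthonormalBasis (Fin (m+1)) ℝ E)
    (Ω : Set E) (hΩ : MeasurableSet Ω) (g : E → ℝ) (hg : Integrable g)
    (hgsupp : ∀ x, x ∉ Ω → g x = 0) :
    ∫ t : ℝ, (∫ x in Ω ∩ {x : E | ⟪x, b 0⟫ = t}, g x ∂(μH[(m:ℕ)] : Measure E))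
      = (kappa m).toReal * ∫ x, g x := by
  have hmp := Phi_mp b
  have hgm : AEStronglyMeasurable g volume := hg.aestronglyMeasurable
  have hint : Integrable (fun p : ℝ × (Fin m → ℝ) => g (Phi b p)) volume :=
    (hmp.integrable_comp hgm).2 hg
  have h1 : ∫ x, g x = ∫ p : ℝ × (Fin m → ℝ), g (Phi b p) := by
    have hgm' : AEStronglyMeasurable g (Measure.map (Phi b) volume) := by
      rw [hmp.map_eq]; exact hgm
    rw [← hmp.map_eq, integral_map hmp.measurable.aemeasurable hgm']
  have h2 : ∫ p : ℝ × (Fin m → ℝ), g (Phi b p)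
      = ∫ t : ℝ, ∫ y : Fin m → ℝ, g (Phi b (t, y)) := by
    rw [show (volume : Measure (ℝ × (Fin m → ℝ))) = Measure.prod volume volume from
      Measure.volume_eq_prod _ _, integral_prod _ ?_]
    rwa [← Measure.volume_eq_prod]
  calc ∫ t : ℝ, (∫ x in Ω ∩ {x : E | ⟪x, b 0⟫ = t}, g x ∂(μH[(m:ℕ)] : Measure E))
      = ∫ t : ℝ, (kappa m).toReal * ∫ y : Fin m → ℝ, g (Phi b (t, y)) := by
        congr 1; funext t; exact slice_integral b t Ω hΩ g hgsupp
    _ = (kappa m).toReal * ∫ t : ℝ, ∫ y : Fin m → ℝ, g (Phi b (t, y)) := by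
        simp_rw [← smul_eq_mul]; rw [MeasureTheory.integral_smul]
    _ = (kappa m).toReal * ∫ x, g x := by rw [h1, h2]

lemma slice_pos (b : OrthonormalBasis (Fin (m+1)) ℝ E)
    {Ω : Set E} (hopen : IsOpen Ω) {t : ℝ} {x : E} (hx : x ∈ Ω) (hxt : ⟪x, b 0⟫ = t) :
    0 < μH[(m:ℕ)] (Ω ∩ {y : E | ⟪y, b 0⟫ = t}) := by
  obtain ⟨ε, hε, hball⟩ := Metric.isOpen_iff.1 hopen x hx
  obtain ⟨z, hz⟩ : x ∈ Set.range (psi b t) := by rw [range_psi]; exact hxt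
  have hS : Metric.ball x ε ∩ {y : E | ⟪y, b 0⟫ = t} ⊆ Ω ∩ {y : E | ⟪y, b 0⟫ = t} :=
    Set.inter_subset_inter_left _ hball
  refine lt_of_lt_of_le ?_ (measure_mono hS)
  have hmeas : MeasurableSet (Metric.ball x ε ∩ {y : E | ⟪y, b 0⟫ = t}) :=
    Metric.isOpen_ball.measurableSet.inter
      (isClosed_eq (continuous_id.inner continuous_const) continuous_const).measurableSet
  have h1 : μH[(m:ℕ)] (Metric.ball x ε ∩ {y : E | ⟪y, b 0⟫ = t})
      = (μH[(m:ℕ)] : Measure E).restrict {y : E | ⟪y, b 0⟫ = t}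
          (Metric.ball x ε ∩ {y : E | ⟪y, b 0⟫ = t}) := by
    rw [Measure.restrict_apply hmeas, Set.inter_assoc, Set.inter_self]
  rw [h1, slice_restrict,
    Measure.map_apply (psi_isometry b t).continuous.measurable hmeas]
  have h2 : Metric.ball z ε ⊆ psi b t ⁻¹' (Metric.ball x ε ∩ {y : E | ⟪y, b 0⟫ = t}) := by
    intro y hy
    constructor
    · show psi b t y ∈ Metric.ball x ε
      rw [Metric.mem_ball, ← hz, (psi_isometry b t).dist_eq]
      exact hy
    · have : psi b t y ∈ Set.range (psi b t) := ⟨y, rfl⟩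
      rw [range_psi] at this; exact this
  refine lt_of_lt_of_le ?_ (measure_mono h2)
  rw [hausdorff_eq]
  simp only [Measure.smul_apply, smul_eq_mul]
  have hb : 0 < (volume : Measure F2) (Metric.ball z ε) := Metric.measure_ball_pos _ _ hε
  exact ENNReal.mul_pos (by simpa using (kappa_pos m).ne') hb.ne'

end dir3


section oneD
variable {G : ℝ → ℝ}

lemma Gii (hGloc : ∀ r : ℝ, IntegrableOn G (Icc 0 r)) {a b : ℝ} (h0 : 0 ≤ a) (hab : a ≤ b) :
    IntervalIntegrable G volume a b := by
  rw [intervalIntegrable_iff_integrableOn_Ioc_of_le hab]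
  exact (hGloc b).mono_set (fun x hx => ⟨le_trans h0 hx.1.le, hx.2⟩)

lemma I_strict (hGpos : ∀ t ≥ (0:ℝ), 0 < G t) (hGloc : ∀ r : ℝ, IntegrableOn G (Icc 0 r))
    {a b : ℝ} (h0 : 0 ≤ a) (hab : a < b) :
    (∫ u in (0:ℝ)..a, G u) < ∫ u in (0:ℝ)..b, G u := by
  have h1 : (∫ u in (0:ℝ)..a, G u) + ∫ u in a..b, G u = ∫ u in (0:ℝ)..b, G u :=
    integral_add_adjacent_intervals (Gii hGloc le_rfl h0) (Gii hGloc h0 hab.le)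
  have h2 : 0 < ∫ u in a..b, G u :=
    intervalIntegral.intervalIntegral_pos_of_pos_on (Gii hGloc h0 hab.le)
      (fun x hx => hGpos x (le_trans h0 hx.1.le)) hab
  linarith

lemma min_eq_left' {r1 r2 t : ℝ} (h : t ≤ (r1 + r2)/2) : min (t - r1) (r2 - t) = t - r1 :=
  min_eq_left (by linarith)

lemma min_eq_right' {r1 r2 t : ℝ} (h : (r1 + r2)/2 ≤ t) : min (t - r1) (r2 - t) = r2 - t :=
  min_eq_right (by linarith)

section minint
variable (hGloc : ∀ r : ℝ, IntegrableOn G (Icc 0 r)) {r1 r2 : ℝ} (h : r1 < r2)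
include hGloc h

lemma ii_left {φ : ℝ → ℝ} (hφ : IntervalIntegrable φ volume 0 ((r2-r1)/2))
    {ψ : ℝ → ℝ} (hψ : ∀ t ∈ Ioc r1 ((r1+r2)/2), φ (t - r1) = ψ t) :
    IntervalIntegrable ψ volume r1 ((r1+r2)/2) := by
  have h2 := hφ.comp_sub_right r1
  rw [show (0:ℝ) + r1 = r1 by ring, show (r2-r1)/2 + r1 = (r1+r2)/2 by ring] at h2
  rw [intervalIntegrable_iff_integrableOn_Ioc_of_le (by linarith)] at h2 ⊢
  exact h2.congr_fun hψ measurableSet_Ioc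

lemma ii_right {φ : ℝ → ℝ} (hφ : IntervalIntegrable φ volume 0 ((r2-r1)/2))
    {ψ : ℝ → ℝ} (hψ : ∀ t ∈ Ioc ((r1+r2)/2) r2, φ (r2 - t) = ψ t) :
    IntervalIntegrable ψ volume ((r1+r2)/2) r2 := by
  have h2 := (hφ.comp_sub_left r2).symm
  rw [show r2 - (r2-r1)/2 = (r1+r2)/2 by ring, show r2 - 0 = r2 by ring] at h2
  rw [intervalIntegrable_iff_integrableOn_Ioc_of_le (by linarith)] at h2 ⊢
  exact h2.congr_fun hψ measurableSet_Ioc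

lemma split_min {φ : ℝ → ℝ} (hφ : IntervalIntegrable φ volume 0 ((r2-r1)/2))
    {ψ : ℝ → ℝ}
    (hψ1 : ∀ t ∈ Icc r1 ((r1+r2)/2), φ (t - r1) = ψ t)
    (hψ2 : ∀ t ∈ Icc ((r1+r2)/2) r2, φ (r2 - t) = ψ t) :
    ∫ t in r1..r2, ψ t = 2 * ∫ u in (0:ℝ)..((r2-r1)/2), φ u := by
  have hsplit := integral_add_adjacent_intervals
    (ii_left hGloc h hφ (fun t ht => hψ1 t ⟨ht.1.le, ht.2⟩))
    (ii_right hGloc h hφ (fun t ht => hψ2 t ⟨ht.1.le, ht.2⟩)) (μ := volume) (f := ψ)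
  rw [← hsplit]
  have e1 : ∫ t in r1..((r1+r2)/2), ψ t = ∫ u in (0:ℝ)..((r2-r1)/2), φ u := by
    rw [intervalIntegral.integral_congr (g := fun t => φ (t - r1))
      (fun t ht => (hψ1 t (by rwa [Set.uIcc_of_le (by linarith)] at ht)).symm),
      intervalIntegral.integral_comp_sub_right φ r1, show r1 - r1 = (0:ℝ) by ring,
      show (r1+r2)/2 - r1 = (r2-r1)/2 by ring]
  have e2 : ∫ t in ((r1+r2)/2)..r2, ψ t = ∫ u in (0:ℝ)..((r2-r1)/2), φ u := by
    rw [intervalIntegral.integral_congr (g := fun t => φ (r2 - t))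
      (fun t ht => (hψ2 t (by rwa [Set.uIcc_of_le (by linarith)] at ht)).symm),
      intervalIntegral.integral_comp_sub_left φ r2, show r2 - r2 = (0:ℝ) by ring,
      show r2 - (r1+r2)/2 = (r2-r1)/2 by ring]
  rw [e1, e2]; ring

lemma int_min :
    ∫ t in r1..r2, G (min (t - r1) (r2 - t)) = 2 * ∫ u in (0:ℝ)..((r2-r1)/2), G u := by
  refine split_min hGloc h (Gii hGloc le_rfl (by linarith)) ?_ ?_
  · exact fun t ht => congrArg G (min_eq_left' ht.2).symm
  · exact fun t ht => congrArg G (min_eq_right' ht.1).symm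

lemma int_min_moment :
    ∫ t in r1..r2, t * G (min (t - r1) (r2 - t))
      = (r1 + r2) * ∫ u in (0:ℝ)..((r2-r1)/2), G u := by
  have hG2 := Gii hGloc (le_refl (0:ℝ)) (by linarith : (0:ℝ) ≤ (r2-r1)/2)
  have hφ1 : IntervalIntegrable (fun u => (u + r1) * G u) volume 0 ((r2-r1)/2) :=
    hG2.continuousOn_mul (by fun_prop)
  have hφ2 : IntervalIntegrable (fun u => (r2 - u) * G u) volume 0 ((r2-r1)/2) :=
    hG2.continuousOn_mul (by fun_prop)
  have e1 : ∫ t in r1..((r1+r2)/2), t * G (min (t - r1) (r2 - t))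
      = ∫ u in (0:ℝ)..((r2-r1)/2), (u + r1) * G u := by
    rw [intervalIntegral.integral_congr (g := fun t => (fun u => (u + r1) * G u) (t - r1)) ?_,
      intervalIntegral.integral_comp_sub_right (fun u => (u + r1) * G u) r1,
      show r1 - r1 = (0:ℝ) by ring, show (r1+r2)/2 - r1 = (r2-r1)/2 by ring]
    intro t ht
    rw [Set.uIcc_of_le (by linarith)] at ht
    simp only [min_eq_left' ht.2, sub_add_cancel]
  have e2 : ∫ t in ((r1+r2)/2)..r2, t * G (min (t - r1) (r2 - t))
      = ∫ u in (0:ℝ)..((r2-r1)/2), (r2 - u) * G u := by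
    rw [intervalIntegral.integral_congr (g := fun t => (fun u => (r2 - u) * G u) (r2 - t)) ?_,
      intervalIntegral.integral_comp_sub_left (fun u => (r2 - u) * G u) r2,
      show r2 - r2 = (0:ℝ) by ring, show r2 - (r1+r2)/2 = (r2-r1)/2 by ring]
    intro t ht
    rw [Set.uIcc_of_le (by linarith)] at ht
    simp only [min_eq_right' ht.1, sub_sub_cancel]
  have hsplit := integral_add_adjacent_intervals
    (ii_left hGloc h hφ1 (fun t ht => by simp only [min_eq_left' ht.2, sub_add_cancel]))
    (ii_right hGloc h hφ2 (fun t ht => by simp only [min_eq_right' ht.1.le, sub_sub_cancel]))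
    (μ := volume) (f := fun t => t * G (min (t - r1) (r2 - t)))
  rw [← hsplit, e1, e2, ← intervalIntegral.integral_add hφ1 hφ2,
    show (fun u => (u + r1) * G u + (r2 - u) * G u) = fun u => (r1 + r2) * G u by
      funext u; ring, intervalIntegral.integral_const_mul]
end minint
end oneD

section ball
variable {n : ℕ}
local notation "E" => EuclideanSpace ℝ (Fin n)

lemma ball_char {Ω : Set E} (hopen : IsOpen Ω) (hconv : Convex ℝ Ω)
    (hbdd : Bornology.IsBounded Ω) (hne : Ω.Nonempty)
    (c : E) (R : ℝ) (hR : 0 < R)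
    (hsup : ∀ ξ : E, ‖ξ‖ = 1 → sSup ((fun x => ⟪x, ξ⟫) '' Ω) = ⟪c, ξ⟫ + R)
    (hstrict : ∀ (ξ : E), ‖ξ‖ = 1 → ∀ x ∈ Ω, ⟪x, ξ⟫ < sSup ((fun x => ⟪x, ξ⟫) '' Ω)) :
    Ω = Metric.ball c R := by
  apply Set.Subset.antisymm
  · intro x hx
    rcases eq_or_ne x c with rfl | hxc
    · simpa using hR
    · have hnorm : 0 < ‖x - c‖ := by
        rw [norm_pos_iff, sub_ne_zero]; exact hxc
      set ξ := ‖x - c‖⁻¹ • (x - c) with hξdef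
      have hξ : ‖ξ‖ = 1 := by
        rw [hξdef, norm_smul, norm_inv, norm_norm, inv_mul_cancel₀ hnorm.ne']
      have h1 := hstrict ξ hξ x hx
      rw [hsup ξ hξ] at h1
      have h2 : ⟪x - c, ξ⟫ < R := by
        rw [inner_sub_left] at *; linarith
      rw [hξdef, real_inner_smul_right, real_inner_self_eq_norm_sq] at h2
      rw [Metric.mem_ball, dist_eq_norm]
      have : ‖x - c‖⁻¹ * ‖x - c‖^2 = ‖x - c‖ := by field_simp
      linarith [this ▸ h2]
  · intro y hy
    by_contra hyn
    obtain ⟨φ, hφ⟩ := geometric_hahn_banach_open_point hconv hopen hyn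
    obtain ⟨x0, hx0⟩ := hne
    have hφne : φ ≠ 0 := by
      intro h0
      have := hφ x0 hx0
      rw [h0] at this
      simp at this
    set v := (InnerProductSpace.toDual ℝ E).symm φ with hv
    have hvφ : ∀ x : E, ⟪x, v⟫ = φ x := by
      intro x
      rw [hv, real_inner_comm]
      exact InnerProductSpace.toDual_symm_apply
    have hvne : v ≠ 0 := by
      intro h0
      apply hφne
      ext x
      have := hvφ x
      rw [h0] at this
      simpa using this.symm
    have hnv : 0 < ‖v‖ := norm_pos_iff.2 hvne
    set ξ := ‖v‖⁻¹ • v with hξdef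
    have hξ : ‖ξ‖ = 1 := by
      rw [hξdef, norm_smul, norm_inv, norm_norm, inv_mul_cancel₀ hnv.ne']
    have hbound : sSup ((fun x => ⟪x, ξ⟫) '' Ω) ≤ ⟪y, ξ⟫ := by
      apply csSup_le (Set.Nonempty.image _ ⟨x0, hx0⟩)
      rintro r ⟨x, hx, rfl⟩
      have hlt : ⟪x, v⟫ < ⟪y, v⟫ := by rw [hvφ x, hvφ y]; exact hφ x hx
      show ⟪x, ξ⟫ ≤ ⟪y, ξ⟫
      rw [hξdef, real_inner_smul_right, real_inner_smul_right]
      exact mul_le_mul_of_nonneg_left hlt.le (by positivity)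
    rw [hsup ξ hξ] at hbound
    have h2 : R ≤ ⟪y - c, ξ⟫ := by rw [inner_sub_left]; linarith
    have h3 : ⟪y - c, ξ⟫ ≤ ‖y - c‖ := by
      have := real_inner_le_norm (y - c) ξ
      rwa [hξ, mul_one] at this
    rw [Metric.mem_ball, dist_eq_norm] at hy
    linarith
end ball

section geo
variable {n : ℕ} {Ω : Set (EuclideanSpace ℝ (Fin n))}

local notation "E" => EuclideanSpace ℝ (Fin n)

lemma img_nonempty (hne : Ω.Nonempty) (ξ : E) : ((fun x => ⟪x, ξ⟫) '' Ω).Nonempty :=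
  hne.image _

lemma img_bdd (hbdd : Bornology.IsBounded Ω) (ξ : E) :
    BddAbove ((fun x => ⟪x, ξ⟫) '' Ω) ∧ BddBelow ((fun x => ⟪x, ξ⟫) '' Ω) := by
  obtain ⟨C, hC⟩ := hbdd.exists_norm_le
  constructor
  · refine ⟨C * ‖ξ‖, ?_⟩
    rintro y ⟨x, hx, rfl⟩
    calc ⟪x, ξ⟫ ≤ ‖x‖ * ‖ξ‖ := real_inner_le_norm x ξ
      _ ≤ C * ‖ξ‖ := by have := hC x hx; have : (0:ℝ) ≤ ‖ξ‖ := norm_nonneg _; nlinarith [hC x hx]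
  · refine ⟨-(C * ‖ξ‖), ?_⟩
    rintro y ⟨x, hx, rfl⟩
    have h1 : ⟪-x, ξ⟫ ≤ ‖-x‖ * ‖ξ‖ := real_inner_le_norm (-x) ξ
    rw [inner_neg_left, norm_neg] at h1
    have : (0:ℝ) ≤ ‖ξ‖ := norm_nonneg _
    nlinarith [hC x hx]

lemma strict_slab (hopen : IsOpen Ω) (hbdd : Bornology.IsBounded Ω)
    {ξ : E} (hξ : ‖ξ‖ = 1) {x : E} (hx : x ∈ Ω) :
    sInf ((fun x => ⟪x, ξ⟫) '' Ω) < ⟪x, ξ⟫ ∧ ⟪x, ξ⟫ < sSup ((fun x => ⟪x, ξ⟫) '' Ω) := by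
  obtain ⟨ε, hε, hball⟩ := Metric.isOpen_iff.1 hopen x hx
  have hmem : ∀ c : ℝ, |c| < ε → x + c • ξ ∈ Ω := by
    intro c hc
    apply hball
    rw [Metric.mem_ball, dist_eq_norm]
    simp only [add_sub_cancel_left, norm_smul, hξ, mul_one, Real.norm_eq_abs]
    exact hc
  have h1 : x + (ε/2) • ξ ∈ Ω := hmem _ (by rw [abs_of_pos (by linarith)]; linarith)
  have h2 : x + (-(ε/2)) • ξ ∈ Ω := hmem _ (by rw [abs_of_neg (by linarith)]; linarith)
  have hi : ∀ c : ℝ, ⟪x + c • ξ, ξ⟫ = ⟪x, ξ⟫ + c := by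
    intro c
    rw [inner_add_left, real_inner_smul_left, real_inner_self_eq_norm_sq, hξ]
    ring
  constructor
  · have := csInf_le (img_bdd hbdd ξ).2 ⟨_, h2, rfl⟩
    simp only [hi] at this; linarith
  · have := le_csSup (img_bdd hbdd ξ).1 ⟨_, h1, rfl⟩
    simp only [hi] at this; linarith

lemma slab_lt (hopen : IsOpen Ω) (hbdd : Bornology.IsBounded Ω) (hne : Ω.Nonempty)
    {ξ : E} (hξ : ‖ξ‖ = 1) :
    sInf ((fun x => ⟪x, ξ⟫) '' Ω) < sSup ((fun x => ⟪x, ξ⟫) '' Ω) := by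
  obtain ⟨x, hx⟩ := hne
  obtain ⟨h1, h2⟩ := strict_slab hopen hbdd hξ hx
  linarith

lemma slice_mem (hconv : Convex ℝ Ω) (hbdd : Bornology.IsBounded Ω) (hne : Ω.Nonempty)
    {ξ : E} {t : ℝ} (h1 : sInf ((fun x => ⟪x, ξ⟫) '' Ω) < t)
    (h2 : t < sSup ((fun x => ⟪x, ξ⟫) '' Ω)) :
    ∃ x ∈ Ω, ⟪x, ξ⟫ = t := by
  obtain ⟨ya, ⟨a, ha, rfl⟩, hya⟩ := exists_lt_of_csInf_lt (img_nonempty hne ξ) h1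
  obtain ⟨yb, ⟨c, hc, rfl⟩, hyb⟩ := exists_lt_of_lt_csSup (img_nonempty hne ξ) h2
  set ta := ⟪a, ξ⟫; set tb := ⟪c, ξ⟫
  have hab : ta < tb := lt_trans hya hyb
  set lam := (t - ta)/(tb - ta) with hlam
  have h0 : 0 ≤ lam := div_nonneg (by linarith) (by linarith)
  have h01 : lam ≤ 1 := by rw [div_le_one (by linarith)]; linarith
  refine ⟨(1 - lam) • a + lam • c, hconv ha hc (by linarith) h0 (by ring), ?_⟩
  rw [inner_add_left, real_inner_smul_left, real_inner_smul_left]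
  show (1 - lam) * ta + lam * tb = t
  have hne0 : tb - ta ≠ 0 := by intro h'; rw [sub_eq_zero] at h'; exact absurd h' (ne_of_gt hab)
  rw [hlam]
  field_simp
  ring
end geo

theorem stmt11 (n : ℕ) (hn : 2 ≤ n) (Ω : Set (EuclideanSpace ℝ (Fin n)))
    (hopen : IsOpen Ω) (hconv : Convex ℝ Ω) (hbdd : Bornology.IsBounded Ω)
    (hne : Ω.Nonempty)
    (G : ℝ → ℝ) (hGpos : ∀ t ≥ (0:ℝ), 0 < G t)
    (hGloc : ∀ r : ℝ, IntegrableOn G (Icc 0 r))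
    (f : EuclideanSpace ℝ (Fin n) → ℝ) (hf : Integrable f)
    (hsupp : ∀ x, x ∉ Ω → f x = 0)
    (hradon : ∀ (ξ : EuclideanSpace ℝ (Fin n)) (t : ℝ), ‖ξ‖ = 1 →
      0 < μH[(n - 1 : ℕ)] (Ω ∩ {x : EuclideanSpace ℝ (Fin n) | ⟪x, ξ⟫ = t}) →
      ∫ x in Ω ∩ {x : EuclideanSpace ℝ (Fin n) | ⟪x, ξ⟫ = t}, f x ∂μH[(n - 1 : ℕ)]
        = G (min (t - sInf ((fun x => ⟪x, ξ⟫) '' Ω)) (sSup ((fun x => ⟪x, ξ⟫) '' Ω) - t))) :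
    ∃ (c : EuclideanSpace ℝ (Fin n)) (R : ℝ), 0 < R ∧ Ω = Metric.ball c R := by
  obtain ⟨m, rfl⟩ : ∃ m, n = m + 1 := ⟨n - 1, by omega⟩
  simp only [Nat.add_sub_cancel] at hradon
  have hΩ : MeasurableSet Ω := hopen.measurableSet
  obtain ⟨C, hC⟩ := hbdd.exists_norm_le
  -- integrability of weighted moments
  have hmul : ∀ (w : EuclideanSpace ℝ (Fin (m+1)) → ℝ), Continuous w →
      (∀ x ∈ Ω, |w x| ≤ C) → Integrable (fun x => w x * f x) := by
    intro w hwc hwb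
    refine Integrable.mono' (hf.norm.const_mul C)
      (hwc.aestronglyMeasurable.mul hf.aestronglyMeasurable) ?_
    filter_upwards with x
    by_cases hx : x ∈ Ω
    · rw [norm_mul, Real.norm_eq_abs (w x)]
      exact mul_le_mul_of_nonneg_right (hwb x hx) (norm_nonneg _)
    · rw [hsupp x hx]; simp
  set r1 : EuclideanSpace ℝ (Fin (m+1)) → ℝ := fun ξ => sInf ((fun x => ⟪x, ξ⟫) '' Ω) with hr1
  set r2 : EuclideanSpace ℝ (Fin (m+1)) → ℝ := fun ξ => sSup ((fun x => ⟪x, ξ⟫) '' Ω) with hr2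
  -- the key per-direction computation
  have key : ∀ ξ : EuclideanSpace ℝ (Fin (m+1)), ‖ξ‖ = 1 →
      (kappa m).toReal * (∫ x, f x) = 2 * (∫ u in (0:ℝ)..((r2 ξ - r1 ξ)/2), G u) ∧
      (kappa m).toReal * (∫ x, ⟪x, ξ⟫ * f x)
        = (r1 ξ + r2 ξ) * (∫ u in (0:ℝ)..((r2 ξ - r1 ξ)/2), G u) := by
    intro ξ hξ
    obtain ⟨b, hb0⟩ := exists_basis ξ hξ
    have hrlt : r1 ξ < r2 ξ := slab_lt hopen hbdd hne hξ
    have hmeasH : ∀ t : ℝ, MeasurableSet {x : EuclideanSpace ℝ (Fin (m+1)) | ⟪x, ξ⟫ = t} :=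
      fun t => (isClosed_eq (continuous_id.inner continuous_const) continuous_const).measurableSet
    set S : ℝ → ℝ := fun t =>
      ∫ x in Ω ∩ {x : EuclideanSpace ℝ (Fin (m+1)) | ⟪x, ξ⟫ = t}, f x ∂μH[(m:ℕ)] with hS
    have hSval : ∀ t, S t = Set.indicator (Ioo (r1 ξ) (r2 ξ))
        (fun t => G (min (t - r1 ξ) (r2 ξ - t))) t := by
      intro t
      by_cases ht : t ∈ Ioo (r1 ξ) (r2 ξ)
      · rw [Set.indicator_of_mem ht]
        obtain ⟨x, hxΩ, hxt⟩ := slice_mem hconv hbdd hne ht.1 ht.2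
        refine hradon ξ t hξ ?_
        have := slice_pos b hopen hxΩ (show ⟪x, b 0⟫ = t by rw [hb0]; exact hxt)
        rwa [hb0] at this
      · rw [Set.indicator_of_notMem ht]
        have hempty : Ω ∩ {x : EuclideanSpace ℝ (Fin (m+1)) | ⟪x, ξ⟫ = t} = ∅ := by
          ext x
          simp only [Set.mem_inter_iff, Set.mem_setOf_eq, Set.mem_empty_iff_false, iff_false,
            not_and]
          intro hxΩ hxt
          obtain ⟨hl, hr⟩ := strict_slab hopen hbdd hξ hxΩ
          exact ht ⟨by rw [← hxt]; exact hl, by rw [← hxt]; exact hr⟩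
        rw [hS]
        simp only [hempty, Measure.restrict_empty, integral_zero_measure]
    have hb0' : (fun t : ℝ => ∫ x in Ω ∩ {x : EuclideanSpace ℝ (Fin (m+1)) | ⟪x, b 0⟫ = t},
        f x ∂μH[(m:ℕ)]) = S := by rw [hb0]
    -- zeroth moment
    have hfub := fubini_dir b Ω hΩ f hf hsupp
    rw [show (fun t : ℝ => ∫ x in Ω ∩ {x | ⟪x, b 0⟫ = t}, f x ∂μH[(m:ℕ)]) = S from hb0'] at hfub
    have hSint : ∫ t : ℝ, S t = 2 * ∫ u in (0:ℝ)..((r2 ξ - r1 ξ)/2), G u := by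
      calc ∫ t : ℝ, S t
          = ∫ t : ℝ, Set.indicator (Ioo (r1 ξ) (r2 ξ))
              (fun t => G (min (t - r1 ξ) (r2 ξ - t))) t := by
            congr 1; funext t; exact hSval t
        _ = ∫ t in Ioo (r1 ξ) (r2 ξ), G (min (t - r1 ξ) (r2 ξ - t)) :=
            integral_indicator measurableSet_Ioo
        _ = ∫ t in Ioc (r1 ξ) (r2 ξ), G (min (t - r1 ξ) (r2 ξ - t)) :=
            (integral_Ioc_eq_integral_Ioo).symm
        _ = ∫ t in (r1 ξ)..(r2 ξ), G (min (t - r1 ξ) (r2 ξ - t)) :=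
            (intervalIntegral.integral_of_le hrlt.le).symm
        _ = 2 * ∫ u in (0:ℝ)..((r2 ξ - r1 ξ)/2), G u := int_min hGloc hrlt
    constructor
    · rw [← hfub, hSint]
    -- first moment
    · have hg2 : Integrable (fun x => ⟪x, ξ⟫ * f x) := by
        refine hmul _ (continuous_id.inner continuous_const) ?_
        intro x hx
        calc |⟪x, ξ⟫| ≤ ‖x‖ * ‖ξ‖ := abs_real_inner_le_norm x ξ
          _ ≤ C := by rw [hξ, mul_one]; exact hC x hx
      have hg2supp : ∀ x, x ∉ Ω → ⟪x, ξ⟫ * f x = 0 := fun x hx => by rw [hsupp x hx, mul_zero]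
      have hfub2 := fubini_dir b Ω hΩ (fun x => ⟪x, ξ⟫ * f x) hg2 hg2supp
      have hslice2 : ∀ t : ℝ,
          (∫ x in Ω ∩ {x : EuclideanSpace ℝ (Fin (m+1)) | ⟪x, b 0⟫ = t}, ⟪x, ξ⟫ * f x
            ∂μH[(m:ℕ)]) = t * S t := by
        intro t
        rw [hb0]
        rw [setIntegral_congr_fun (hΩ.inter (hmeasH t))
          (g := fun x => t * f x) (fun x hx => by rw [(hx.2 : ⟪x, ξ⟫ = t)]),
          MeasureTheory.integral_const_mul]
      rw [show (fun t : ℝ => ∫ x in Ω ∩ {x | ⟪x, b 0⟫ = t}, ⟪x, ξ⟫ * f x ∂μH[(m:ℕ)])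
        = fun t => t * S t from funext hslice2] at hfub2
      have hSint2 : ∫ t : ℝ, t * S t
          = (r1 ξ + r2 ξ) * ∫ u in (0:ℝ)..((r2 ξ - r1 ξ)/2), G u := by
        calc ∫ t : ℝ, t * S t
            = ∫ t : ℝ, Set.indicator (Ioo (r1 ξ) (r2 ξ))
                (fun t => t * G (min (t - r1 ξ) (r2 ξ - t))) t := by
              congr 1; funext t
              by_cases ht : t ∈ Ioo (r1 ξ) (r2 ξ)
              · rw [hSval t, Set.indicator_of_mem ht, Set.indicator_of_mem ht]
              · rw [hSval t, Set.indicator_of_notMem ht, Set.indicator_of_notMem ht, mul_zero]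
          _ = ∫ t in Ioo (r1 ξ) (r2 ξ), t * G (min (t - r1 ξ) (r2 ξ - t)) :=
              integral_indicator measurableSet_Ioo
          _ = ∫ t in Ioc (r1 ξ) (r2 ξ), t * G (min (t - r1 ξ) (r2 ξ - t)) :=
              (integral_Ioc_eq_integral_Ioo).symm
          _ = ∫ t in (r1 ξ)..(r2 ξ), t * G (min (t - r1 ξ) (r2 ξ - t)) :=
              (intervalIntegral.integral_of_le hrlt.le).symm
          _ = (r1 ξ + r2 ξ) * ∫ u in (0:ℝ)..((r2 ξ - r1 ξ)/2), G u := int_min_moment hGloc hrlt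
      rw [← hfub2, hSint2]
  -- fix a reference direction
  set ξ0 : EuclideanSpace ℝ (Fin (m+1)) := EuclideanSpace.single 0 (1:ℝ) with hξ0def
  have hξ0 : ‖ξ0‖ = 1 := by rw [hξ0def, EuclideanSpace.norm_single]; norm_num
  set R : ℝ := (r2 ξ0 - r1 ξ0)/2 with hRdef
  have hRpos : 0 < R := by
    have := slab_lt hopen hbdd hne hξ0
    rw [hRdef]; simp only [hr1, hr2]; linarith [this]
  set I0 : ℝ := ∫ u in (0:ℝ)..R, G u with hI0def
  have hI0pos : 0 < I0 := by
    have h0 : (∫ u in (0:ℝ)..(0:ℝ), G u) = 0 := intervalIntegral.integral_same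
    have := I_strict hGpos hGloc le_rfl hRpos
    rw [hI0def]; linarith [h0 ▸ this]
  have hκ : 0 < (kappa m).toReal := by
    have := kappa_pos m
    exact_mod_cast this
  -- constant width
  have hwidth : ∀ ξ : EuclideanSpace ℝ (Fin (m+1)), ‖ξ‖ = 1 → (r2 ξ - r1 ξ)/2 = R := by
    intro ξ hξ
    have h1 := (key ξ hξ).1
    have h2 := (key ξ0 hξ0).1
    have heq : (∫ u in (0:ℝ)..((r2 ξ - r1 ξ)/2), G u) = I0 := by
      rw [hI0def, hRdef]; linarith
    have hw : 0 < (r2 ξ - r1 ξ)/2 := by linarith [slab_lt hopen hbdd hne hξ]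
    rcases lt_trichotomy ((r2 ξ - r1 ξ)/2) R with h | h | h
    · exact absurd heq (ne_of_lt (hI0def ▸ I_strict hGpos hGloc hw.le h))
    · exact h
    · exact absurd heq.symm (ne_of_lt (I_strict hGpos hGloc hRpos.le h))
  -- the center
  set m0 : EuclideanSpace ℝ (Fin (m+1)) :=
    (WithLp.equiv 2 (Fin (m+1) → ℝ)).symm (fun i => ∫ x, x i * f x) with hm0def
  have hxi : ∀ i : Fin (m+1), Integrable (fun x : EuclideanSpace ℝ (Fin (m+1)) => x i * f x) := by
    intro i
    refine hmul _ ?_ ?_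
    · exact (EuclideanSpace.proj i).continuous
    · intro x hx
      calc |x i| ≤ ‖x‖ := by
            rw [EuclideanSpace.norm_eq, show |x i| = Real.sqrt ((x i)^2) from
              (Real.sqrt_sq_eq_abs _).symm]
            apply Real.sqrt_le_sqrt
            have h2 : (x i)^2 ≤ ∑ j, (x j)^2 :=
              Finset.single_le_sum (f := fun j => (x j)^2) (fun j _ => sq_nonneg _)
                (Finset.mem_univ i)
            simpa [sq_abs] using h2
        _ ≤ C := hC x hx
  have hm0inner : ∀ ξ : EuclideanSpace ℝ (Fin (m+1)), ⟪m0, ξ⟫ = ∫ x, ⟪x, ξ⟫ * f x := by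
    intro ξ
    have hcoord : ∀ i, m0 i = ∫ x, x i * f x := fun i => by rw [hm0def]; rfl
    have hpt : ∀ x : EuclideanSpace ℝ (Fin (m+1)),
        ⟪x, ξ⟫ * f x = ∑ i, ξ i * (x i * f x) := by
      intro x
      rw [PiLp.inner_apply]
      simp only [RCLike.inner_apply, conj_trivial]
      rw [Finset.sum_mul]
      exact Finset.sum_congr rfl (fun i _ => by ring)
    calc ⟪m0, ξ⟫ = ∑ i, m0 i * ξ i := by
          rw [PiLp.inner_apply]; simp only [RCLike.inner_apply, conj_trivial]; exact Finset.sum_congr rfl (fun i _ => mul_comm _ _)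
      _ = ∑ i, ξ i * ∫ x, x i * f x := Finset.sum_congr rfl (fun i _ => by rw [hcoord i]; ring)
      _ = ∑ i, ∫ x, ξ i * (x i * f x) := Finset.sum_congr rfl
          (fun i _ => (MeasureTheory.integral_const_mul _ _).symm)
      _ = ∫ x, ∑ i, ξ i * (x i * f x) := (integral_finset_sum _
          (fun i _ => (hxi i).const_mul _)).symm
      _ = ∫ x, ⟪x, ξ⟫ * f x := by congr 1; funext x; rw [hpt x]
  set c0 : EuclideanSpace ℝ (Fin (m+1)) := ((kappa m).toReal / (2 * I0)) • m0 with hc0def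
  have hc0inner : ∀ ξ : EuclideanSpace ℝ (Fin (m+1)), ‖ξ‖ = 1 →
      ⟪c0, ξ⟫ = (r1 ξ + r2 ξ)/2 := by
    intro ξ hξ
    have hM := (key ξ hξ).2
    rw [hwidth ξ hξ, ← hI0def] at hM
    rw [hc0def, real_inner_smul_left, hm0inner ξ]
    rw [div_mul_eq_mul_div, div_eq_div_iff (by positivity) (by norm_num : (2:ℝ) ≠ 0)]
    linear_combination 2 * hM
  have hsup : ∀ ξ : EuclideanSpace ℝ (Fin (m+1)), ‖ξ‖ = 1 →
      sSup ((fun x => ⟪x, ξ⟫) '' Ω) = ⟪c0, ξ⟫ + R := by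
    intro ξ hξ
    have h1 := hc0inner ξ hξ
    have h2 := hwidth ξ hξ
    show r2 ξ = _
    linarith
  have hstrict : ∀ (ξ : EuclideanSpace ℝ (Fin (m+1))), ‖ξ‖ = 1 →
      ∀ x ∈ Ω, ⟪x, ξ⟫ < sSup ((fun x => ⟪x, ξ⟫) '' Ω) :=
    fun ξ hξ x hx => (strict_slab hopen hbdd hξ hx).2
  exact ⟨c0, R, hRpos, ball_char hopen hconv hbdd hne c0 R hRpos hsup hstrict⟩
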